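/- Let E be a row-finite directed graph with no sinks that satisfies condition (M). Then every circuit in E is terminal, i.e., no circuit of E admits an exit. -/

import Mathlib

namespace CKGraph

variable {V E : Type*}

/-- One-step relation: there is an edge from `v` to `w`. -/
def Step (o t : E → V) (v w : V) : Prop := ∃ e, o e = v ∧ t e = w

/-- `Reach o t v w` means `v ≥ w`: there is a (possibly trivial) directed path
from `v` to `w`. -/
def Reach (o t : E → V) (v w : V) : Prop := Relation.ReflTransGen (Step o t) v w

/-- A finite path: consecutive edges are composable. -/
def IsPath (o t : E → V) (p : List E) : Prop := List.Chain' (fun e f => t e = o f) p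

/-- An infinite path. -/
def IsInfPath (o t : E → V) (p : ℕ → E) : Prop := ∀ n, t (p n) = o (p (n + 1))

/-- Tail-equivalence of infinite paths: they eventually share the same tail. -/
def InfEquiv (p q : ℕ → E) : Prop := ∃ j k : ℕ, ∀ r : ℕ, p (j + r) = q (k + r)

/-- The set of vertices occurring in a finite path. -/
def FinPathVerts (o t : E → V) (p : List E) : Set V := {v | ∃ e ∈ p, o e = v ∨ t e = v}

/-- The set of vertices occurring in an infinite path. -/
def InfPathVerts (o t : E → V) (p : ℕ → E) : Set V := {v | ∃ n, o (p n) = v}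

/-- Every vertex emits at most finitely many edges. -/
def RowFinite (o : E → V) : Prop := ∀ v : V, {e : E | o e = v}.Finite

/-- Every vertex emits at least one edge. -/
def NoSinks (o : E → V) : Prop := ∀ v : V, ∃ e : E, o e = v

/-- Condition (M): for every vertex `v` and every infinite path `l`, only finitely
many infinite paths begin at `v` and are equivalent to `l`. -/
def CondM (o t : E → V) : Prop :=
  ∀ (v : V) (l : ℕ → E), IsInfPath o t l →
    {p : ℕ → E | IsInfPath o t p ∧ o (p 0) = v ∧ InfEquiv p l}.Finite

/-- A circuit: a finite path of positive length whose origin and terminus agree. -/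
def IsCircuit (o t : E → V) (p : List E) : Prop :=
  IsPath o t p ∧ ∃ h : p ≠ [], o (p.head h) = t (p.getLast h)

/-- An exit of a circuit: an edge not on the circuit whose origin is a vertex of
the circuit. -/
def IsExit (o t : E → V) (p : List E) (e : E) : Prop :=
  e ∉ p ∧ o e ∈ FinPathVerts o t p

/-- A terminal circuit: a circuit with no exit. -/
def TerminalCircuit (o t : E → V) (p : List E) : Prop :=
  IsCircuit o t p ∧ ∀ e : E, ¬ IsExit o t p e

/-- A transitory circuit: a circuit with an exit, none of whose exits gets back
to the circuit. -/
def TransitoryCircuit (o t : E → V) (p : List E) : Prop :=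
  IsCircuit o t p ∧ (∃ e : E, IsExit o t p e) ∧
    ∀ e : E, IsExit o t p e → ∀ w ∈ FinPathVerts o t p, ¬ Reach o t (t e) w

/-- The set of vertices of the infinite path `l` that emit multiple edges
returning to `l`; its cardinality is `N_l`. -/
def ReturnVerts (o t : E → V) (l : ℕ → E) : Set V :=
  {v | v ∈ InfPathVerts o t l ∧ ∃ e f : E, e ≠ f ∧ o e = v ∧ o f = v ∧
    (∃ w ∈ InfPathVerts o t l, Reach o t (t e) w) ∧
    (∃ w ∈ InfPathVerts o t l, Reach o t (t f) w)}

/-- A maximal tail. -/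
def MaximalTail (o t : E → V) (γ : Set V) : Prop :=
  γ.Nonempty ∧
  (∀ v₁ ∈ γ, ∀ v₂ ∈ γ, ∃ z ∈ γ, Reach o t v₁ z ∧ Reach o t v₂ z) ∧
  (∀ v ∈ γ, ∃ e : E, o e = v ∧ t e ∈ γ) ∧
  (∀ v w : V, Reach o t v w → w ∈ γ → v ∈ γ)

/-- The edge set of the induced subgraph `Graph(γ)`. -/
def edgesIn (o t : E → V) (γ : Set V) : Set E := {e | o e ∈ γ ∧ t e ∈ γ}

/-- One-step relation in the subgraph with edge set `S`. -/
def StepIn (o t : E → V) (S : Set E) (v w : V) : Prop := ∃ e ∈ S, o e = v ∧ t e = w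

/-- Reachability inside the subgraph with edge set `S`. -/
def ReachIn (o t : E → V) (S : Set E) (v w : V) : Prop :=
  Relation.ReflTransGen (StepIn o t S) v w

/-- `H` is saturated in the subgraph with vertex set `V0` and edge set `E0`:
every non-singular vertex of the subgraph all of whose successors lie in `H`
belongs to `H`. -/
def SaturatedIn (o t : E → V) (V0 : Set V) (E0 : Set E) (H : Set V) : Prop :=
  ∀ v ∈ V0, (∃ e ∈ E0, o e = v) → {e ∈ E0 | o e = v}.Finite →
    (∀ e ∈ E0, o e = v → t e ∈ H) → v ∈ H

/-- The saturation of `S` in the subgraph `(V0, E0)`: the smallest subset of `V0`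
containing `S` which is saturated in the subgraph. -/
def saturationIn (o t : E → V) (V0 : Set V) (E0 : Set E) (S : Set V) : Set V :=
  ⋂₀ {H : Set V | S ⊆ H ∧ H ⊆ V0 ∧ SaturatedIn o t V0 E0 H}

/-- A hereditary subset of vertices. -/
def Hereditary (o t : E → V) (H : Set V) : Prop :=
  ∀ v ∈ H, ∀ w : V, Reach o t v w → w ∈ H

/-- A singular vertex: a sink or an infinite emitter. -/
def Singular (o : E → V) (v : V) : Prop :=
  (¬ ∃ e : E, o e = v) ∨ {e : E | o e = v}.Infinite

/-- A saturated subset of vertices: every non-singular vertex all of whose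
successors lie in `H` belongs to `H`. -/
def Saturated (o t : E → V) (H : Set V) : Prop :=
  ∀ v : V, ¬ Singular o v → (∀ e : E, o e = v → t e ∈ H) → v ∈ H

/-- The saturation of `S`: the smallest saturated set containing `S`. -/
def saturation (o t : E → V) (S : Set V) : Set V :=
  ⋂₀ {H : Set V | S ⊆ H ∧ Saturated o t H}


/-- If a row-finite directed graph with no sinks satisfies
condition (M), then every circuit is terminal, i.e. no circuit admits an exit. -/
theorem stmt0 [Countable V] [Countable E] (o t : E → V)
    (hrf : RowFinite o) (hns : NoSinks o) (hM : CondM o t) :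
    ∀ p : List E, IsCircuit o t p → ∀ e : E, ¬ IsExit o t p e := by
  rintro p ⟨hpath, hne, hwrap⟩ e ⟨henp, hev⟩
  set L := p.length with hLdef
  have hL : 0 < L := List.length_pos_iff.mpr hne
  have hget_eq : ∀ (a b : ℕ) (ha : a < p.length) (hb : b < p.length), a = b →
      p.get ⟨a, ha⟩ = p.get ⟨b, hb⟩ := by
    intro a b ha hb h; subst h; rfl
  -- cyclic infinite path over the circuit
  set f : ℕ → E := fun n => p.get ⟨n % L, Nat.mod_lt _ hL⟩ with hfdef
  have hf_at : ∀ (i : ℕ) (h : i < p.length), f i = p.get ⟨i, h⟩ := by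
    intro i h
    exact hget_eq _ _ _ _ (Nat.mod_eq_of_lt (by omega))
  have hfL : ∀ n, f (n + L) = f n := by
    intro n; simp only [hfdef, Nat.add_mod_right]
  have hchain := List.isChain_iff_getElem.mp hpath
  have hcyc : ∀ n, t (f n) = o (f (n + 1)) := by
    intro n
    have hi : n % L < L := Nat.mod_lt _ hL
    rcases lt_or_eq_of_le (Nat.succ_le_of_lt hi) with h1 | h1
    · have h2 : (n + 1) % L = n % L + 1 := by
        conv_lhs => rw [show n + 1 = L * (n / L) + (n % L + 1) from by
          have := Nat.div_add_mod n L; omega]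
        rw [Nat.mul_add_mod, Nat.mod_eq_of_lt h1]
      rw [show f (n + 1) = p.get ⟨n % L + 1, by omega⟩ from hget_eq _ _ _ _ h2]
      exact hchain (n % L) (by omega)
    · have h2 : (n + 1) % L = 0 := by
        conv_lhs => rw [show n + 1 = L * (n / L) + L from by
          have := Nat.div_add_mod n L; omega]
        rw [Nat.mul_add_mod, Nat.mod_self]
      rw [show f (n + 1) = p.get ⟨0, by omega⟩ from hget_eq _ _ _ _ h2,
          show f n = p.get ⟨p.length - 1, by omega⟩ from hget_eq _ _ _ _ (by omega)]
      have hlast : p.getLast hne = p.get ⟨p.length - 1, by omega⟩ := by simp [List.getLast_eq_getElem]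
      have hhead : p.head hne = p.get ⟨0, by omega⟩ := by
        simp [List.head_eq_getElem, List.get_eq_getElem]
      rw [← hlast, ← hhead]
      exact hwrap.symm
  -- find index i₀ with o (p[i₀]) = o e
  obtain ⟨g, hgp, hg⟩ := hev
  obtain ⟨⟨i, hiL⟩, hget⟩ := List.mem_iff_get.mp hgp
  have hfig : f i = g := by rw [hf_at i hiL]; exact hget
  have hi0 : ∃ i₀, o (f i₀) = o e := by
    rcases hg with h | h
    · exact ⟨i, by rw [hfig]; exact h⟩
    · exact ⟨i + 1, by rw [← hcyc i, hfig]; exact h⟩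
  obtain ⟨i₀, hi₀⟩ := hi0
  have hfi : ∀ k, o (f (i₀ + k * L)) = o e := by
    intro k
    induction k with
    | zero => simpa using hi₀
    | succ k ih => rw [show i₀ + (k + 1) * L = (i₀ + k * L) + L by ring, hfL]; exact ih
  -- choose an infinite path μ starting from t e
  set next : V → E := fun v => (hns v).choose with hnextdef
  have hnext : ∀ v, o (next v) = v := fun v => (hns v).choose_spec
  set μ : ℕ → E := fun n => Nat.rec (next (t e)) (fun _ prev => next (t prev)) n with hmudef
  have hmu0 : o (μ 0) = t e := hnext _
  have hmus : ∀ n, o (μ (n + 1)) = t (μ n) := fun n => hnext _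
  -- the family of paths
  set q : ℕ → ℕ → E := fun n m =>
    if m < n * L then f (i₀ + m) else if m = n * L then e else μ (m - (n * L + 1)) with hqdef
  have hq_circ : ∀ n m, m < n * L → q n m = f (i₀ + m) := by
    intro n m h; simp only [hqdef]; rw [if_pos h]
  have hq_e : ∀ n, q n (n * L) = e := by
    intro n; simp only [hqdef]; rw [if_neg (by omega)]; simp
  have hq_mu : ∀ n m, n * L < m → q n m = μ (m - (n * L + 1)) := by
    intro n m h; simp only [hqdef]; rw [if_neg (by omega), if_neg (by omega)]
  have hq_path : ∀ n, IsInfPath o t (q n) := by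
    intro n m
    rcases lt_trichotomy (m + 1) (n * L) with h | h | h
    · rw [hq_circ n m (by omega), hq_circ n (m + 1) h,
        show i₀ + (m + 1) = (i₀ + m) + 1 by ring]
      exact hcyc _
    · have hq1 : q n (m + 1) = e := by rw [h]; exact hq_e n
      rw [hq_circ n m (by omega), hq1, hcyc (i₀ + m),
        show i₀ + m + 1 = i₀ + n * L by omega]
      exact hfi n
    · rcases lt_or_eq_of_le (Nat.le_of_lt_succ h) with h2 | h2
      · rw [hq_mu n m h2, hq_mu n (m + 1) (by omega),
          show m + 1 - (n * L + 1) = (m - (n * L + 1)) + 1 by omega]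
        exact (hmus _).symm
      · subst h2
        rw [hq_e, hq_mu n (n * L + 1) (by omega), show n * L + 1 - (n * L + 1) = 0 by omega]
        exact hmu0.symm
  have hq_start : ∀ n, o (q n 0) = o e := by
    intro n
    rcases Nat.eq_zero_or_pos (n * L) with h | h
    · have h0 : q n 0 = e := by rw [show (0 : ℕ) = n * L by omega]; exact hq_e n
      rw [h0]
    · rw [hq_circ n 0 h]; simpa using hi₀
  -- the reference path l
  set l : ℕ → E := fun r => if r = 0 then e else μ (r - 1) with hldef
  have hl0 : l 0 = e := by simp [hldef]
  have hls : ∀ k, l (k + 1) = μ k := by intro k; simp [hldef]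
  have hl_path : IsInfPath o t l := by
    intro n
    cases n with
    | zero => rw [hl0, hls 0]; exact hmu0.symm
    | succ k => rw [hls k, hls (k + 1)]; exact (hmus k).symm
  have hq_equiv : ∀ n, InfEquiv (q n) l := by
    intro n
    refine ⟨n * L, 0, fun r => ?_⟩
    cases r with
    | zero => rw [Nat.add_zero, Nat.add_zero, hq_e, hl0]
    | succ k =>
      rw [hq_mu n (n * L + (k + 1)) (by omega),
        show n * L + (k + 1) - (n * L + 1) = k by omega, Nat.zero_add, hls k]
  -- injectivity
  have key : ∀ n m, n < m → q n ≠ q m := by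
    intro n m hlt hnm
    have h1 : q n (n * L) = e := hq_e n
    have h2 : q m (n * L) = f (i₀ + n * L) :=
      hq_circ m (n * L) ((Nat.mul_lt_mul_right hL).mpr hlt)
    have : e ∈ p := by
      rw [← h1, hnm, h2, hfdef]; exact List.get_mem _ _
    exact henp this
  have hq_inj : Function.Injective q := by
    intro n m hnm
    by_contra hcon
    rcases lt_or_gt_of_ne hcon with h | h
    · exact key n m h hnm
    · exact key m n h hnm.symm
  have hfin := hM (o e) l hl_path
  have hinf : {p : ℕ → E | IsInfPath o t p ∧ o (p 0) = o e ∧ InfEquiv p l}.Infinite :=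
    Set.infinite_of_injective_forall_mem hq_inj
      (fun n => ⟨hq_path n, hq_start n, hq_equiv n⟩)
  exact hinf hfin

end CKGraph
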